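/- Let G be a grid diagram of size n and let x, y be generators of G. A function D : (ℤ/n) × (ℤ/n) → ℤ is a positive domain from x to y with total vertex multiplicity N(D) = 1 if and only if D is the indicator function of an empty rectangle from x to y. (This is the combinatorial content of the correspondence between Maslov index 1 pseudo-holomorphic disks on the symmetric product of a grid and empty rectangles.) -/

import Mathlib

set_option linter.unusedSectionVars false
set_option maxHeartbeats 800000


/-!
STATEMENT 3. A function `D : (ZMod n) × (ZMod n) → ℤ` is a positive domain from
`x` to `y` with total vertex multiplicity `N(D) = 1` if and only if `D` is the
indicator function of an empty rectangle from `x` to `y`.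

Here `D (i, j)` is the multiplicity of the square with lower-left lattice
corner `(i, j)`; for a lattice point `p = (i, j)` one sets
`d_p(D) = D (i, j) + D (i-1, j-1) − D (i-1, j) − D (i, j-1)` and the vertex
multiplicity `n_p(D) = (D (i, j) + D (i-1, j-1) + D (i-1, j) + D (i, j-1))/4`.
`D` is a positive domain from `x` to `y` if all its values are `≥ 0` and
`d_p(D) = [p ∈ x] − [p ∈ y]` for every lattice point `p`; the total vertex
multiplicity is `N(D) = Σ_{p ∈ x} n_p(D) + Σ_{p ∈ y} n_p(D)`.
-/

namespace GridDiagrams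

variable {n : ℕ}

/-- `c` lies in the cyclic half-open interval `[a, b)` in `ZMod n`. -/
def cycIco (a b c : ZMod n) : Prop := (c - a).val < (b - a).val

/-- `c` lies in the open cyclic interval `(a, b)` in `ZMod n`. -/
def cycIoo (a b c : ZMod n) : Prop := 0 < (c - a).val ∧ (c - a).val < (b - a).val

/-- The set of squares making up the rectangle determined by the generator `x`
and the ordered pair of columns `(a, b)`. -/
def rectSquares (x : Equiv.Perm (ZMod n)) (a b : ZMod n) : Set (ZMod n × ZMod n) :=
  {q | cycIco a b q.1 ∧ cycIco (x a) (x b) q.2}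

/-- The lattice points in the open interior of the rectangle determined by `x`
and the ordered pair of columns `(a, b)`. -/
def rectInterior (x : Equiv.Perm (ZMod n)) (a b : ZMod n) : Set (ZMod n × ZMod n) :=
  {q | cycIoo a b q.1 ∧ cycIoo (x a) (x b) q.2}

/-- The ordered pair `(a, b)` determines a rectangle from `x` to `y`. -/
def IsRect (x y : Equiv.Perm (ZMod n)) (a b : ZMod n) : Prop :=
  a ≠ b ∧ y = x * Equiv.swap a b

/-- The ordered pair `(a, b)` determines an empty rectangle from `x` to `y`. -/
def IsEmptyRect (x y : Equiv.Perm (ZMod n)) (a b : ZMod n) : Prop :=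
  IsRect x y a b ∧ ∀ i : ZMod n, (i, x i) ∉ rectInterior x a b

/-- `d_p(D)` for a lattice point `p = (i, j)`. -/
def dCorner (D : ZMod n × ZMod n → ℤ) (p : ZMod n × ZMod n) : ℤ :=
  D p + D (p.1 - 1, p.2 - 1) - D (p.1 - 1, p.2) - D (p.1, p.2 - 1)

/-- The vertex multiplicity `n_p(D)`: the average of the multiplicities of the
four squares around the lattice point `p`. -/
def vertexMult (D : ZMod n × ZMod n → ℤ) (p : ZMod n × ZMod n) : ℚ :=
  ((D p + D (p.1 - 1, p.2 - 1) + D (p.1 - 1, p.2) + D (p.1, p.2 - 1) : ℤ) : ℚ) / 4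

/-- `D` is a positive domain from `x` to `y`: it has nonnegative multiplicities
and satisfies `d_p(D) = [p ∈ x] − [p ∈ y]` at every lattice point `p`. -/
def IsPositiveDomain (x y : Equiv.Perm (ZMod n)) (D : ZMod n × ZMod n → ℤ) : Prop :=
  (∀ q : ZMod n × ZMod n, 0 ≤ D q) ∧
  ∀ p : ZMod n × ZMod n,
    dCorner D p = (if p.2 = x p.1 then 1 else 0) - (if p.2 = y p.1 then 1 else 0)

/-- The total vertex multiplicity `N(D) = Σ_{p ∈ x} n_p(D) + Σ_{p ∈ y} n_p(D)`. -/
def totalVertexMult [NeZero n] (x y : Equiv.Perm (ZMod n))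
    (D : ZMod n × ZMod n → ℤ) : ℚ :=
  (∑ i : ZMod n, vertexMult D (i, x i)) + ∑ i : ZMod n, vertexMult D (i, y i)

section Helpers
variable [NeZero n]

lemma cyc_ind (P : ZMod n → Prop) (z0 : ZMod n) (h0 : P z0)
    (hs : ∀ z, P z → P (z + 1)) : ∀ z, P z := by
  have key : ∀ t : ℕ, P (z0 + (t : ZMod n)) := by
    intro t
    induction t with
    | zero => simpa using h0
    | succ k ih =>
        have h2 := hs _ ih
        have he : (((k + 1 : ℕ)) : ZMod n) = (k : ZMod n) + 1 := by push_cast; ring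
        rw [he, ← add_assoc]
        exact h2
  intro z
  have hz : z0 + (((z - z0).val : ℕ) : ZMod n) = z := by
    rw [ZMod.natCast_val, ZMod.cast_id]; ring
  rw [← hz]; exact key _

lemma val_inj {u v : ZMod n} (h : u.val = v.val) : u = v := by
  have h2 : ((u.val : ℕ) : ZMod n) = ((v.val : ℕ) : ZMod n) := by rw [h]
  rwa [ZMod.natCast_val, ZMod.cast_id, ZMod.natCast_val, ZMod.cast_id] at h2

lemma val_sub_one (z : ZMod n) :
    (z - 1).val = if z.val = 0 then n - 1 else z.val - 1 := by
  have hn : 1 ≤ n := Nat.one_le_iff_ne_zero.mpr (NeZero.ne n)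
  split_ifs with h
  · have hz0 : z = 0 := (ZMod.val_eq_zero z).mp h
    subst hz0
    have he : (0 : ZMod n) - 1 = ((n - 1 : ℕ) : ZMod n) := by
      have : ((n - 1 : ℕ) : ZMod n) = (n : ZMod n) - 1 := by
        push_cast [Nat.cast_sub hn]; ring
      rw [this, ZMod.natCast_self]
    rw [he, ZMod.val_cast_of_lt (by omega)]
  · have h1 : 1 ≤ z.val := Nat.one_le_iff_ne_zero.mpr h
    have hz : ((z.val : ℕ) : ZMod n) = z := by rw [ZMod.natCast_val, ZMod.cast_id]
    have he : z - 1 = ((z.val - 1 : ℕ) : ZMod n) := by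
      rw [Nat.cast_sub h1, hz]; push_cast; ring
    rw [he, ZMod.val_cast_of_lt (by have := ZMod.val_lt z; omega)]

/-- Indicator (in `ℤ`) of the cyclic interval `[a, b)`. -/
def indA (a b c : ZMod n) : ℤ := if (c - a).val < (b - a).val then 1 else 0

lemma indA_nonneg (a b c : ZMod n) : 0 ≤ indA a b c := by
  unfold indA; split_ifs <;> omega

lemma sub_ne_zero_val {a b : ZMod n} (hab : a ≠ b) : (b - a).val ≠ 0 := by
  intro h
  exact hab (by have := (ZMod.val_eq_zero _).mp h; rw [sub_eq_zero] at this; exact this.symm)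

lemma indA_self {a b : ZMod n} (hab : a ≠ b) : indA a b a = 1 := by
  unfold indA
  rw [if_pos]
  rw [sub_self, ZMod.val_zero]
  exact Nat.pos_of_ne_zero (sub_ne_zero_val hab)

lemma indA_left_pred (a b : ZMod n) : indA a b (a - 1) = 0 := by
  unfold indA
  rw [if_neg]
  have he : a - 1 - a = (0 : ZMod n) - 1 := by ring
  rw [he, val_sub_one, if_pos (ZMod.val_zero)]
  have := ZMod.val_lt (b - a)
  omega

lemma indA_right (a b : ZMod n) : indA a b b = 0 := by
  unfold indA; rw [if_neg]; omega

lemma indA_right_pred {a b : ZMod n} (hab : a ≠ b) : indA a b (b - 1) = 1 := by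
  unfold indA
  rw [if_pos]
  have he : b - 1 - a = (b - a) - 1 := by ring
  rw [he, val_sub_one, if_neg (sub_ne_zero_val hab)]
  have := Nat.pos_of_ne_zero (sub_ne_zero_val hab)
  omega

lemma indA_jump (a b j : ZMod n) (hab : a ≠ b) :
    indA a b j - indA a b (j - 1)
      = (if j = a then (1 : ℤ) else 0) - (if j = b then 1 else 0) := by
  have hw0 : (b - a).val ≠ 0 := sub_ne_zero_val hab
  have hwn : (b - a).val < n := ZMod.val_lt _
  have htn : (j - a).val < n := ZMod.val_lt _
  have e1 : (if j = a then (1 : ℤ) else 0) = (if (j - a).val = 0 then 1 else 0) := by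
    refine if_congr ?_ rfl rfl
    rw [← sub_eq_zero, ← ZMod.val_eq_zero]
  have e2 : (if j = b then (1 : ℤ) else 0)
      = (if (j - a).val = (b - a).val then 1 else 0) := by
    refine if_congr ?_ rfl rfl
    constructor
    · rintro rfl; rfl
    · intro h; have := val_inj h; rwa [sub_left_inj] at this
  have he : j - 1 - a = (j - a) - 1 := by ring
  unfold indA
  rw [he, val_sub_one, e1, e2]
  split_ifs <;> omega

lemma indA_const {a b j : ZMod n} (hab : a ≠ b) (hja : j ≠ a) (hjb : j ≠ b) :
    indA a b j = indA a b (j - 1) := by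
  have h := indA_jump a b j hab
  rw [if_neg hja, if_neg hjb] at h
  omega

lemma dCorner_apply (D : ZMod n × ZMod n → ℤ) (i j : ZMod n) :
    dCorner D (i, j) = D (i, j) + D (i - 1, j - 1) - D (i - 1, j) - D (i, j - 1) := rfl

lemma vertexMult_apply (D : ZMod n × ZMod n → ℤ) (i j : ZMod n) :
    vertexMult D (i, j)
      = ((D (i, j) + D (i - 1, j - 1) + D (i - 1, j) + D (i, j - 1) : ℤ) : ℚ) / 4 := rfl

lemma ind_eq (x : Equiv.Perm (ZMod n)) (a b : ZMod n) :
    (Set.indicator (rectSquares x a b) fun _ => (1 : ℤ))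
      = fun q => indA a b q.1 * indA (x a) (x b) q.2 := by
  funext q
  by_cases h : q ∈ rectSquares x a b
  · rw [Set.indicator_of_mem h]
    obtain ⟨h1, h2⟩ := h
    have h1' : (q.1 - a).val < (b - a).val := h1
    have h2' : (q.2 - x a).val < (x b - x a).val := h2
    unfold indA
    rw [if_pos h1', if_pos h2']
    ring
  · rw [Set.indicator_of_notMem h]
    rcases not_and_or.mp h with h1 | h1
    · have h1' : ¬ (q.1 - a).val < (b - a).val := h1
      unfold indA; rw [if_neg h1']; ring
    · have h1' : ¬ (q.2 - x a).val < (x b - x a).val := h1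
      unfold indA; rw [if_neg h1']; ring

lemma dCorner_rect (x : Equiv.Perm (ZMod n)) (a b : ZMod n) (hab : a ≠ b)
    (p : ZMod n × ZMod n) :
    dCorner (fun q => indA a b q.1 * indA (x a) (x b) q.2) p
      = (if p.2 = x p.1 then 1 else 0)
          - (if p.2 = (x * Equiv.swap a b) p.1 then 1 else 0) := by
  obtain ⟨i, j⟩ := p
  have hxab : x a ≠ x b := fun h => hab (x.injective h)
  have hA := indA_jump a b i hab
  have hB := indA_jump (x a) (x b) j hxab
  have expand : dCorner (fun q => indA a b q.1 * indA (x a) (x b) q.2) (i, j)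
      = (indA a b i - indA a b (i - 1))
          * (indA (x a) (x b) j - indA (x a) (x b) (j - 1)) := by
    rw [dCorner_apply]; ring
  rw [expand, hA, hB]
  simp only [Equiv.Perm.mul_apply]
  by_cases hia : i = a
  · have hib : i ≠ b := by rw [hia]; exact hab
    rw [if_pos hia, if_neg hib, hia]; simp only [Equiv.swap_apply_left]
    ring
  · by_cases hib : i = b
    · rw [if_neg hia, if_pos hib, hib]; simp only [Equiv.swap_apply_right]
      ring
    · rw [if_neg hia, if_neg hib]; simp only [Equiv.swap_apply_of_ne_of_ne hia hib]
      ring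

lemma exists_rank1 (E : ZMod n × ZMod n → ℤ) (h : ∀ p, dCorner E p = 0) :
    ∃ c e : ZMod n → ℤ, ∀ i j, E (i, j) = c i + e j := by
  refine ⟨fun i => E (i, 0) - E (0, 0), fun j => E (0, j), ?_⟩
  have claimA : ∀ i j : ZMod n, E (i, j) - E (i - 1, j) = E (i, 0) - E (i - 1, 0) := by
    intro i
    refine cyc_ind (fun j => E (i, j) - E (i - 1, j) = E (i, 0) - E (i - 1, 0)) 0 rfl ?_
    intro j ih
    have hd := h (i, j + 1)
    rw [dCorner_apply] at hd
    have he : j + 1 - 1 = j := by ring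
    rw [he] at hd
    omega
  intro i0
  refine cyc_ind
    (fun i => ∀ j, E (i, j) = (E (i, 0) - E (0, 0)) + E (0, j)) 0 (by intro j; ring) ?_ i0
  intro i ih j
  have hA := claimA (i + 1) j
  have hA0 : i + 1 - 1 = i := by ring
  rw [hA0] at hA
  have h1 := ih j
  have h2 := ih 0
  omega

lemma sum_shift (c : ZMod n → ℤ) : (∑ i : ZMod n, c (i - 1)) = ∑ i : ZMod n, c i :=
  Fintype.sum_equiv (Equiv.subRight (1 : ZMod n)) _ _ (fun _ => rfl)

lemma sum_perm (x : Equiv.Perm (ZMod n)) (e : ZMod n → ℤ) :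
    (∑ i : ZMod n, e (x i)) = ∑ i : ZMod n, e i :=
  Fintype.sum_equiv x _ _ (fun _ => rfl)

lemma tvm_eq (x y : Equiv.Perm (ZMod n)) (D : ZMod n × ZMod n → ℤ) :
    totalVertexMult x y D =
      ((((∑ i : ZMod n, (D (i, x i) + D (i - 1, x i - 1) + D (i - 1, x i) + D (i, x i - 1)))
        + ∑ i : ZMod n, (D (i, y i) + D (i - 1, y i - 1) + D (i - 1, y i) + D (i, y i - 1)) : ℤ)) : ℚ) / 4 := by
  unfold totalVertexMult
  have key : ∀ z : Equiv.Perm (ZMod n), (∑ i : ZMod n, vertexMult D (i, z i))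
      = (((∑ i : ZMod n, (D (i, z i) + D (i - 1, z i - 1) + D (i - 1, z i) + D (i, z i - 1))) : ℤ) : ℚ) / 4 := by
    intro z
    rw [Int.cast_sum, Finset.sum_div]
    exact Finset.sum_congr rfl fun i _ => by rw [vertexMult_apply]
  rw [key x, key y, ← add_div, Int.cast_add]

lemma dCorner_sub (D R : ZMod n × ZMod n → ℤ) (p : ZMod n × ZMod n) :
    dCorner (fun q => D q - R q) p = dCorner D p - dCorner R p := by
  unfold dCorner; dsimp only; ring

lemma key_sum (x : Equiv.Perm (ZMod n)) (a b : ZMod n) (hab : a ≠ b)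
    (D : ZMod n × ZMod n → ℤ)
    (hdc : ∀ p : ZMod n × ZMod n, dCorner D p
      = (if p.2 = x p.1 then 1 else 0) - (if p.2 = (x * Equiv.swap a b) p.1 then 1 else 0))
    (z5 : D (a, x b) = 0) (z7 : D (b, x a) = 0) :
    D (a, x a) + D (b, x b) = 1 := by
  have hxab : x a ≠ x b := fun h => hab (x.injective h)
  have hdcE : ∀ p, dCorner (fun q => D q - (indA a b q.1 * indA (x a) (x b) q.2)) p = 0 := by
    intro p
    rw [dCorner_sub, hdc, dCorner_rect x a b hab]
    ring
  obtain ⟨c, e, hce⟩ := exists_rank1 _ hdcE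
  have hv : ∀ i j, D (i, j) = c i + e j + indA a b i * indA (x a) (x b) j := by
    intro i j
    have h := hce i j
    dsimp only at h
    linarith
  have F1 : c a + e (x a) = D (a, x a) - 1 := by
    have h := hv a (x a); rw [indA_self hab, indA_self hxab] at h; linarith
  have F5 : c a + e (x b) = 0 := by
    have h := hv a (x b); rw [z5, indA_right] at h; linarith
  have F4 : c b + e (x a) = 0 := by
    have h := hv b (x a); rw [indA_right] at h; linarith [z7]
  have F8 : c b + e (x b) = D (b, x b) := by
    have h := hv b (x b); rw [indA_right] at h; linarith
  linarith

lemma main2 (x : Equiv.Perm (ZMod n)) (a b : ZMod n) (hab : a ≠ b)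
    (D : ZMod n × ZMod n → ℤ)
    (hdc : ∀ p : ZMod n × ZMod n, dCorner D p
      = (if p.2 = x p.1 then 1 else 0) - (if p.2 = (x * Equiv.swap a b) p.1 then 1 else 0))
    (z1 : D (a - 1, x a) = 0) (z2 : D (a, x a - 1) = 0)
    (z3 : D (b - 1, x b) = 0) (z4 : D (b, x b - 1) = 0)
    (z5 : D (a, x b) = 0) (z7 : D (b, x a) = 0)
    (z9 : ∀ i, i ≠ a → i ≠ b → D (i, x i) = 0 ∧ D (i - 1, x i) = 0 ∧ D (i, x i - 1) = 0)
    (ha1 : D (a, x a) = 1) :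
    (D = Set.indicator (rectSquares x a b) fun _ => (1 : ℤ)) ∧
      ∀ i, (i, x i) ∉ rectInterior x a b := by
  have hxab : x a ≠ x b := fun h => hab (x.injective h)
  have hdcE : ∀ p, dCorner (fun q => D q - (indA a b q.1 * indA (x a) (x b) q.2)) p = 0 := by
    intro p
    rw [dCorner_sub, hdc, dCorner_rect x a b hab]
    ring
  obtain ⟨c, e, hce⟩ := exists_rank1 _ hdcE
  have hv : ∀ i j, D (i, j) = c i + e j + indA a b i * indA (x a) (x b) j := by
    intro i j
    have h := hce i j
    dsimp only at h
    linarith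
  have F1 : c a + e (x a) = 0 := by
    have h := hv a (x a); rw [ha1, indA_self hab, indA_self hxab] at h; linarith
  have F2 : c (a - 1) + e (x a) = 0 := by
    have h := hv (a - 1) (x a); rw [z1, indA_left_pred] at h; linarith
  have F3 : c a + e (x a - 1) = 0 := by
    have h := hv a (x a - 1); rw [z2, indA_left_pred] at h; linarith
  have F4 : c b + e (x a) = 0 := by
    have h := hv b (x a); rw [z7, indA_right] at h; linarith
  have F5 : c a + e (x b) = 0 := by
    have h := hv a (x b); rw [z5, indA_right] at h; linarith
  have F6 : c (b - 1) + e (x b) = 0 := by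
    have h := hv (b - 1) (x b); rw [z3, indA_right] at h; linarith
  have F7 : c b + e (x b - 1) = 0 := by
    have h := hv b (x b - 1); rw [z4, indA_right] at h
    have h2 : indA a b b = 0 := indA_right a b
    nlinarith [h, h2]
  have Cb : c b = c a := by linarith
  have Exb : e (x b) = e (x a) := by linarith
  have Exa1 : e (x a - 1) = e (x a) := by linarith
  have Exb1 : e (x b - 1) = e (x a) := by linarith
  have Cb1 : c (b - 1) = c a := by linarith
  have hcstep : ∀ i, i ≠ a → i ≠ b → c i = c (i - 1) := by
    intro i hia hib
    obtain ⟨d1, d2, _⟩ := z9 i hia hib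
    have h1 := hv i (x i); rw [d1] at h1
    have h2 := hv (i - 1) (x i); rw [d2, ← indA_const hab hia hib] at h2
    linarith
  have hc : ∀ i, c i = c a := by
    refine cyc_ind _ a rfl ?_
    intro z hz
    by_cases h1 : z + 1 = a
    · rw [h1]
    · by_cases h2 : z + 1 = b
      · rw [h2, Cb]
      · have h3 := hcstep (z + 1) h1 h2
        rw [add_sub_cancel_right] at h3
        rw [h3, hz]
  have hec : ∀ j, e j = e (x a) := by
    refine cyc_ind _ (x a) rfl ?_
    intro z hz
    by_cases h1 : z + 1 = x a
    · rw [h1]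
    · by_cases h2 : z + 1 = x b
      · rw [h2, Exb]
      · have hxi : x (x.symm (z + 1)) = z + 1 := x.apply_symm_apply _
        have hia : x.symm (z + 1) ≠ a := fun h => h1 (by rw [← hxi, h])
        have hib : x.symm (z + 1) ≠ b := fun h => h2 (by rw [← hxi, h])
        obtain ⟨d1, _, d3⟩ := z9 _ hia hib
        have h3 := hv (x.symm (z + 1)) (x (x.symm (z + 1))); rw [d1] at h3
        have h4 := hv (x.symm (z + 1)) (x (x.symm (z + 1)) - 1); rw [d3] at h4
        have hBc : indA (x a) (x b) (x (x.symm (z + 1)))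
            = indA (x a) (x b) (x (x.symm (z + 1)) - 1) :=
          indA_const hxab (by rw [hxi]; exact h1) (by rw [hxi]; exact h2)
        rw [← hBc] at h4
        have h5 : e (x (x.symm (z + 1))) = e (x (x.symm (z + 1)) - 1) := by linarith
        rw [hxi, add_sub_cancel_right] at h5
        rw [h5, hz]
  have hDz : ∀ i j, D (i, j) = indA a b i * indA (x a) (x b) j := by
    intro i j
    have h := hv i j
    rw [hc i, hec j] at h
    linarith
  constructor
  · funext q
    obtain ⟨i, j⟩ := q
    rw [ind_eq]
    exact hDz i j
  · intro i hmem
    have hm : cycIoo a b i ∧ cycIoo (x a) (x b) (x i) := hmem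
    have hcol : 0 < (i - a).val ∧ (i - a).val < (b - a).val := hm.1
    have hrow : 0 < (x i - x a).val ∧ (x i - x a).val < (x b - x a).val := hm.2
    have hia : i ≠ a := by
      intro h; rw [h, sub_self, ZMod.val_zero] at hcol; exact absurd hcol.1 (lt_irrefl 0)
    have hib : i ≠ b := by
      intro h; rw [h] at hcol; exact absurd hcol.2 (lt_irrefl _)
    have d1 := (z9 i hia hib).1
    have h := hDz i (x i)
    unfold indA at h
    rw [if_pos hcol.2, if_pos hrow.2, d1] at h
    norm_num at h

lemma sum_two_support (g : ZMod n → ℤ) (a b : ZMod n) (hab : a ≠ b)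
    (h0 : ∀ i, i ≠ a → i ≠ b → g i = 0) :
    (∑ i : ZMod n, g i) = g a + g b := by
  rw [← Finset.sum_pair hab]
  refine (Finset.sum_subset (Finset.subset_univ _) ?_).symm
  intro i _ hi
  simp only [Finset.mem_insert, Finset.mem_singleton, not_or] at hi
  exact h0 i hi.1 hi.2

lemma backward (x y : Equiv.Perm (ZMod n)) (a b : ZMod n) (hab : a ≠ b)
    (hy : y = x * Equiv.swap a b)
    (hemp : ∀ i : ZMod n, (i, x i) ∉ rectInterior x a b) :
    IsPositiveDomain x y (Set.indicator (rectSquares x a b) fun _ => (1 : ℤ)) ∧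
      totalVertexMult x y (Set.indicator (rectSquares x a b) fun _ => (1 : ℤ)) = 1 := by
  have hxab : x a ≠ x b := fun h => hab (x.injective h)
  rw [ind_eq]
  have rval : ∀ i j : ZMod n,
      (fun q : ZMod n × ZMod n => indA a b q.1 * indA (x a) (x b) q.2) (i, j)
        = indA a b i * indA (x a) (x b) j := fun i j => rfl
  have key0 : ∀ i, i ≠ a → i ≠ b → indA a b i * indA (x a) (x b) (x i) = 0 := by
    intro i hia hib
    by_cases hca : (i - a).val < (b - a).val
    · by_cases hcb : (x i - x a).val < (x b - x a).val
      · exfalso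
        apply hemp i
        show cycIoo a b i ∧ cycIoo (x a) (x b) (x i)
        exact ⟨⟨Nat.pos_of_ne_zero (sub_ne_zero_val (Ne.symm hia)), hca⟩,
          ⟨Nat.pos_of_ne_zero (sub_ne_zero_val (fun h => hia (x.injective h.symm))), hcb⟩⟩
      · unfold indA; rw [if_neg hcb]; ring
    · unfold indA; rw [if_neg hca]; ring
  have hya : y a = x b := by rw [hy]; simp [Equiv.Perm.mul_apply, Equiv.swap_apply_left]
  have hyb : y b = x a := by rw [hy]; simp [Equiv.Perm.mul_apply, Equiv.swap_apply_right]
  have hyi : ∀ i, i ≠ a → i ≠ b → y i = x i := by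
    intro i h1 h2
    rw [hy]; simp [Equiv.Perm.mul_apply, Equiv.swap_apply_of_ne_of_ne h1 h2]
  refine ⟨⟨fun q => mul_nonneg (indA_nonneg _ _ _) (indA_nonneg _ _ _), ?_⟩, ?_⟩
  · intro p
    rw [hy]
    exact dCorner_rect x a b hab p
  · rw [tvm_eq]
    set r : ZMod n × ZMod n → ℤ := fun q => indA a b q.1 * indA (x a) (x b) q.2 with hr
    have hGx : (∑ i : ZMod n, (r (i, x i) + r (i - 1, x i - 1) + r (i - 1, x i) + r (i, x i - 1))) = 2 := by
      rw [sum_two_support _ a b hab]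
      · simp only [rval, indA_self hab, indA_self hxab, indA_left_pred, indA_right,
          indA_right_pred hab, indA_right_pred hxab]
        norm_num
      · intro i hia hib
        have hxia : x i ≠ x a := fun h => hia (x.injective h)
        have hxib : x i ≠ x b := fun h => hib (x.injective h)
        simp only [rval, ← indA_const hab hia hib, ← indA_const hxab hxia hxib,
          key0 i hia hib]
        norm_num
    have hGy : (∑ i : ZMod n, (r (i, y i) + r (i - 1, y i - 1) + r (i - 1, y i) + r (i, y i - 1))) = 2 := by
      rw [sum_two_support _ a b hab]
      · simp only [rval, hya, hyb, indA_self hab, indA_self hxab, indA_left_pred, indA_right,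
          indA_right_pred hab, indA_right_pred hxab]
        norm_num
      · intro i hia hib
        have hxia : x i ≠ x a := fun h => hia (x.injective h)
        have hxib : x i ≠ x b := fun h => hib (x.injective h)
        simp only [rval, hyi i hia hib, ← indA_const hab hia hib, ← indA_const hxab hxia hxib,
          key0 i hia hib]
        norm_num
    rw [hGx, hGy]
    norm_num

lemma forward (x y : Equiv.Perm (ZMod n)) (D : ZMod n × ZMod n → ℤ)
    (hpos : ∀ q : ZMod n × ZMod n, 0 ≤ D q)
    (hdc : ∀ p : ZMod n × ZMod n, dCorner D p
      = (if p.2 = x p.1 then 1 else 0) - (if p.2 = y p.1 then 1 else 0))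
    (hN : totalVertexMult x y D = 1) :
    ∃ a b : ZMod n, IsEmptyRect x y a b ∧
      D = Set.indicator (rectSquares x a b) fun _ => (1 : ℤ) := by
  rw [tvm_eq, div_eq_one_iff_eq (by norm_num : (4 : ℚ) ≠ 0)] at hN
  have hT : (∑ i : ZMod n, (D (i, x i) + D (i - 1, x i - 1) + D (i - 1, x i) + D (i, x i - 1)))
      + ∑ i : ZMod n, (D (i, y i) + D (i - 1, y i - 1) + D (i - 1, y i) + D (i, y i - 1))
        = 4 := by exact_mod_cast hN
  by_cases hxy : x = y
  · exfalso
    subst hxy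
    have hdc0 : ∀ p, dCorner D p = 0 := by intro p; rw [hdc]; ring
    obtain ⟨c, e, hce⟩ := exists_rank1 D hdc0
    have hsum : ∀ i : ZMod n, D (i, x i) + D (i - 1, x i - 1) + D (i - 1, x i) + D (i, x i - 1)
        = 2 * c i + 2 * c (i - 1) + 2 * e (x i) + 2 * e (x i - 1) := by
      intro i; rw [hce, hce, hce, hce]; ring
    rw [Finset.sum_congr rfl (fun i _ => hsum i)] at hT
    have split : (∑ i : ZMod n, (2 * c i + 2 * c (i - 1) + 2 * e (x i) + 2 * e (x i - 1)))
        = 2 * (∑ i : ZMod n, c i) + 2 * (∑ i : ZMod n, c (i - 1))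
          + 2 * (∑ i : ZMod n, e (x i)) + 2 * (∑ i : ZMod n, e (x i - 1)) := by
      rw [Finset.sum_add_distrib, Finset.sum_add_distrib, Finset.sum_add_distrib,
        Finset.mul_sum, Finset.mul_sum, Finset.mul_sum, Finset.mul_sum]
    have sh : (∑ i : ZMod n, c (i - 1)) = ∑ i : ZMod n, c i := sum_shift c
    have sp : (∑ i : ZMod n, e (x i)) = ∑ i : ZMod n, e i := sum_perm x e
    have sp2 : (∑ i : ZMod n, e (x i - 1)) = ∑ i : ZMod n, e i := by
      rw [sum_perm x (fun i => e (i - 1)), sum_shift e]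
    rw [split, sh, sp, sp2] at hT
    omega
  · obtain ⟨a, hxa⟩ : ∃ a, x a ≠ y a := by
      by_contra h; push_neg at h; exact hxy (Equiv.ext h)
    have hxb : x (x.symm (y a)) = y a := x.apply_symm_apply _
    set b := x.symm (y a) with hbdef
    have hab : a ≠ b := by
      intro h
      apply hxa
      calc x a = x b := by rw [h]
        _ = y a := hxb
    have hyb : y b ≠ x b := by
      intro h
      exact hab (y.injective (h.trans hxb)).symm
    have Ea := hdc (a, x a)
    rw [dCorner_apply] at Ea
    dsimp only at Ea
    rw [if_pos rfl, if_neg hxa] at Ea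
    have Eb := hdc (b, x b)
    rw [dCorner_apply] at Eb
    dsimp only at Eb
    rw [if_pos rfl, if_neg (fun h : x b = y b => hyb h.symm)] at Eb
    have Eya := hdc (a, y a)
    rw [dCorner_apply] at Eya
    dsimp only at Eya
    rw [if_neg (fun h : y a = x a => hxa h.symm), if_pos rfl] at Eya
    have Eyb := hdc (b, y b)
    rw [dCorner_apply] at Eyb
    dsimp only at Eyb
    rw [if_neg hyb, if_pos rfl] at Eyb
    have hsplit : ∀ g : ZMod n → ℤ, (∑ i : ZMod n, g i)
        = g a + (g b + ∑ i ∈ (Finset.univ.erase a).erase b, g i) := by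
      intro g
      rw [Finset.add_sum_erase _ g (Finset.mem_erase.mpr ⟨Ne.symm hab, Finset.mem_univ b⟩),
        Finset.add_sum_erase _ g (Finset.mem_univ a)]
    rw [hsplit (fun i => D (i, x i) + D (i - 1, x i - 1) + D (i - 1, x i) + D (i, x i - 1)),
      hsplit (fun i => D (i, y i) + D (i - 1, y i - 1) + D (i - 1, y i) + D (i, y i - 1))] at hT
    have hUx : 0 ≤ ∑ i ∈ (Finset.univ.erase a).erase b,
        (D (i, x i) + D (i - 1, x i - 1) + D (i - 1, x i) + D (i, x i - 1)) :=
      Finset.sum_nonneg fun i _ => by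
        have h1 := hpos (i, x i); have h2 := hpos (i - 1, x i - 1)
        have h3 := hpos (i - 1, x i); have h4 := hpos (i, x i - 1); omega
    have hUy : 0 ≤ ∑ i ∈ (Finset.univ.erase a).erase b,
        (D (i, y i) + D (i - 1, y i - 1) + D (i - 1, y i) + D (i, y i - 1)) :=
      Finset.sum_nonneg fun i _ => by
        have h1 := hpos (i, y i); have h2 := hpos (i - 1, y i - 1)
        have h3 := hpos (i - 1, y i); have h4 := hpos (i, y i - 1); omega
    have p1 := hpos (a, x a); have p2 := hpos (a - 1, x a - 1)
    have p3 := hpos (a - 1, x a); have p4 := hpos (a, x a - 1)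
    have p5 := hpos (b, x b); have p6 := hpos (b - 1, x b - 1)
    have p7 := hpos (b - 1, x b); have p8 := hpos (b, x b - 1)
    have q1 := hpos (a, y a); have q2 := hpos (a - 1, y a - 1)
    have q3 := hpos (a - 1, y a); have q4 := hpos (a, y a - 1)
    have q5 := hpos (b, y b); have q6 := hpos (b - 1, y b - 1)
    have q7 := hpos (b - 1, y b); have q8 := hpos (b, y b - 1)
    have zx1 : D (a - 1, x a) = 0 := by omega
    have zx2 : D (a, x a - 1) = 0 := by omega
    have zx3 : D (b - 1, x b) = 0 := by omega
    have zx4 : D (b, x b - 1) = 0 := by omega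
    have zy1 : D (a, y a) = 0 := by omega
    have zy3 : D (b, y b) = 0 := by omega
    have hUx0 : (∑ i ∈ (Finset.univ.erase a).erase b,
        (D (i, x i) + D (i - 1, x i - 1) + D (i - 1, x i) + D (i, x i - 1))) = 0 := by omega
    have hz9 : ∀ i, i ≠ a → i ≠ b → D (i, x i) = 0 ∧ D (i - 1, x i) = 0 ∧ D (i, x i - 1) = 0
        ∧ D (i - 1, x i - 1) = 0 := by
      intro i hia hib
      have hmem : i ∈ (Finset.univ.erase a).erase b :=
        Finset.mem_erase.mpr ⟨hib, Finset.mem_erase.mpr ⟨hia, Finset.mem_univ i⟩⟩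
      have h0 := (Finset.sum_eq_zero_iff_of_nonneg (fun i _ => by
        have h1 := hpos (i, x i); have h2 := hpos (i - 1, x i - 1)
        have h3 := hpos (i - 1, x i); have h4 := hpos (i, x i - 1); omega)).mp hUx0 i hmem
      have h1 := hpos (i, x i); have h2 := hpos (i - 1, x i - 1)
      have h3 := hpos (i - 1, x i); have h4 := hpos (i, x i - 1)
      omega
    have hyx : ∀ i, i ≠ a → i ≠ b → y i = x i := by
      intro i hia hib
      by_contra hne
      have Ei := hdc (i, x i)
      rw [dCorner_apply] at Ei
      dsimp only at Ei
      rw [if_pos rfl, if_neg (fun h : x i = y i => hne h.symm)] at Ei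
      obtain ⟨d1, d2, d3, d4⟩ := hz9 i hia hib
      omega
    have hyab : y b = x a := by
      by_contra h
      have happ : y (y.symm (x a)) = x a := y.apply_symm_apply _
      have h1 : y.symm (x a) ≠ a := fun hh => hxa (by rw [← happ, hh])
      have h2 : y.symm (x a) ≠ b := fun hh => h (by rw [← hh]; exact happ)
      have h3 := hyx _ h1 h2
      exact h1 (x.injective (h3.symm.trans happ))
    have hy : y = x * Equiv.swap a b := by
      apply Equiv.ext
      intro i
      simp only [Equiv.Perm.mul_apply]
      by_cases h1 : i = a
      · rw [h1]; simp only [Equiv.swap_apply_left]; exact hxb.symm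
      · by_cases h2 : i = b
        · rw [h2]; simp only [Equiv.swap_apply_right]; exact hyab
        · simp only [Equiv.swap_apply_of_ne_of_ne h1 h2]; exact hyx i h1 h2
    have hya' : y a = x b := hxb.symm
    rw [hya'] at zy1
    rw [hyab] at zy3
    rw [hy] at hdc
    have hks := key_sum x a b hab D hdc zy1 zy3
    by_cases hDa : D (a, x a) = 1
    · obtain ⟨hD, hemp⟩ := main2 x a b hab D hdc zx1 zx2 zx3 zx4 zy1 zy3
        (fun i hia hib => ⟨(hz9 i hia hib).1, (hz9 i hia hib).2.1, (hz9 i hia hib).2.2.1⟩) hDa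
      exact ⟨a, b, ⟨⟨hab, hy⟩, hemp⟩, hD⟩
    · have hDb : D (b, x b) = 1 := by omega
      have hdc2 : ∀ p : ZMod n × ZMod n, dCorner D p
          = (if p.2 = x p.1 then 1 else 0)
            - (if p.2 = (x * Equiv.swap b a) p.1 then 1 else 0) := by
        intro p
        rw [hdc p, Equiv.swap_comm]
      obtain ⟨hD, hemp⟩ := main2 x b a (Ne.symm hab) D hdc2 zx3 zx4 zx1 zx2 zy3 zy1
        (fun i hib hia => ⟨(hz9 i hia hib).1, (hz9 i hia hib).2.1, (hz9 i hia hib).2.2.1⟩) hDb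
      exact ⟨b, a, ⟨⟨Ne.symm hab, by rw [hy, Equiv.swap_comm]⟩, hemp⟩, hD⟩

end Helpers


theorem positiveDomain_N_eq_one_iff_emptyRect (n : ℕ) [NeZero n]
    (σO σX : Equiv.Perm (ZMod n))  -- the grid diagram markings
    (x y : Equiv.Perm (ZMod n)) (D : ZMod n × ZMod n → ℤ) :
    (IsPositiveDomain x y D ∧ totalVertexMult x y D = 1) ↔
    (∃ a b : ZMod n, IsEmptyRect x y a b ∧
      D = Set.indicator (rectSquares x a b) fun _ => (1 : ℤ)) := by
  constructor
  · rintro ⟨⟨hpos, hdc⟩, hN⟩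
    exact forward x y D hpos hdc hN
  · rintro ⟨a, b, ⟨⟨hab, hy⟩, hemp⟩, hD⟩
    subst hD
    exact backward x y a b hab hy hemp

end GridDiagrams
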